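/- Let (H, Δ, ε, [−,−,−]) be a Hopf heap over a field k, let (M, ▷, ρ) be a left H-Hopf heap module, and let x ∈ H be group-like. Set M^{coH}_x := {m ∈ M : ρ(m) = x ⊗ m}, and equip H ⊗ M^{coH}_x with the coaction h ⊗ m ↦ h₁ ⊗ (h₂ ⊗ m) and the action (a ⊗ b) ▷ (g ⊗ m) := [a,b,g] ⊗ m. Then the map α : H ⊗ M^{coH}_x → M, α(a ⊗ m) = (a ⊗ x) ▷ m, is an isomorphism of left H-Hopf heap modules, with inverse β(m) = m₍₋₁₎ ⊗ P(m₍₀₎), where P(m) := (x ⊗ m₍₋₁₎) ▷ m₍₀₎ (note P takes values in M^{coH}_x). In particular M ≅ H ⊗ M^{coH}_x as left H-Hopf heap modules. -/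
import Mathlib


open TensorProduct

noncomputable section

variable (k : Type*) [Field k]

section Shuffles

variable (A B P Q R S : Type*)
  [AddCommGroup A] [Module k A] [AddCommGroup B] [Module k B]
  [AddCommGroup P] [Module k P] [AddCommGroup Q] [Module k Q]
  [AddCommGroup R] [Module k R] [AddCommGroup S] [Module k S]

/-- `(a ⊗ b) ⊗ ((p ⊗ q) ⊗ (r ⊗ s)) ↦ (a ⊗ (q ⊗ r)) ⊗ (b ⊗ (p ⊗ s))`, the shuffle appearing in
the compatibility of a Hopf-heap bracket with comultiplication:
`Δ([a,b,c]) = [a₁,b₂,c₁] ⊗ [a₂,b₁,c₂]`. -/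
def sweedlerShuffle :
    ((A ⊗[k] B) ⊗[k] ((P ⊗[k] Q) ⊗[k] (R ⊗[k] S))) →ₗ[k]
      ((A ⊗[k] (Q ⊗[k] R)) ⊗[k] (B ⊗[k] (P ⊗[k] S))) :=
  (tensorTensorTensorComm k A B (Q ⊗[k] R) (P ⊗[k] S)).toLinearMap ∘ₗ
    (TensorProduct.map LinearMap.id
      ((tensorTensorTensorComm k Q P R S).toLinearMap ∘ₗ
        TensorProduct.map (TensorProduct.comm k P Q).toLinearMap LinearMap.id))

/-- `u₁ ⊗ (u₂ ⊗ (u₃ ⊗ u₄)) ↦ (u₁ ⊗ (u₄ ⊗ u₂)) ⊗ u₃`, the shuffle appearing in the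
Rota–Baxter identity. -/
def rbShuffle :
    (A ⊗[k] (P ⊗[k] (Q ⊗[k] R))) →ₗ[k] ((A ⊗[k] (R ⊗[k] P)) ⊗[k] Q) :=
  (TensorProduct.assoc k A (R ⊗[k] P) Q).symm.toLinearMap ∘ₗ
    TensorProduct.map LinearMap.id
      ((TensorProduct.comm k Q (R ⊗[k] P)).toLinearMap ∘ₗ
        (TensorProduct.assoc k Q R P).toLinearMap ∘ₗ
        (TensorProduct.comm k P (Q ⊗[k] R)).toLinearMap)

end Shuffles

section Mul

variable {C : Type*} [AddCommGroup C] [Module k C]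

/-- Right multiplication `a ↦ μ (a ⊗ b)` by a fixed element, for a bilinear product `μ`. -/
def rmulBy (μ : (C ⊗[k] C) →ₗ[k] C) (b : C) : C →ₗ[k] C :=
  μ ∘ₗ ((TensorProduct.mk k C C).flip b)

end Mul

section Heap

variable {C : Type*} [AddCommGroup C] [Module k C] [Coalgebra k C]

/-- Iterated comultiplication `a ↦ a₁ ⊗ (a₂ ⊗ a₃)`. -/
def comul2 : C →ₗ[k] (C ⊗[k] (C ⊗[k] C)) :=
  (TensorProduct.map LinearMap.id Coalgebra.comul) ∘ₗ Coalgebra.comul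

/-- Iterated comultiplication `a ↦ a₁ ⊗ (a₂ ⊗ (a₃ ⊗ a₄))`. -/
def comul3 : C →ₗ[k] (C ⊗[k] (C ⊗[k] (C ⊗[k] C))) :=
  (TensorProduct.map LinearMap.id (comul2 k)) ∘ₗ Coalgebra.comul

/-- The pointwise ternary bracket `[a,b,c]` of a Hopf heap with structure map `χ`. -/
def br (χ : (C ⊗[k] (C ⊗[k] C)) →ₗ[k] C) (a b c : C) : C := χ (a ⊗ₜ[k] (b ⊗ₜ[k] c))

/-- `x` is a group-like element of the coalgebra `C`. -/
def IsGrouplike (x : C) : Prop :=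
  Coalgebra.comul (R := k) x = x ⊗ₜ[k] x ∧ Coalgebra.counit (R := k) x = 1

/-- `(C, Δ, ε, χ)` is a Hopf heap: `χ` is a coalgebra map `C ⊗ C^cop ⊗ C → C`
(counit and comultiplication conditions, the latter in the Sweedler form
`Δ([a,b,c]) = [a₁,b₂,c₁] ⊗ [a₂,b₁,c₂]`), the bracket is associative
(`[[a,b,c],d,h] = [a,b,[c,d,h]]`), and `[c₁,c₂,a] = ε(c)a = [a,c₁,c₂]`. -/
structure IsHopfHeap (χ : (C ⊗[k] (C ⊗[k] C)) →ₗ[k] C) : Prop where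
  counit_br : ∀ a b c : C,
    Coalgebra.counit (R := k) (br k χ a b c) =
      Coalgebra.counit (R := k) a * Coalgebra.counit (R := k) b * Coalgebra.counit (R := k) c
  comul_br : ∀ a b c : C,
    Coalgebra.comul (R := k) (br k χ a b c) =
      TensorProduct.map χ χ (sweedlerShuffle k C C C C C C
        ((Coalgebra.comul (R := k) a) ⊗ₜ[k]
          ((Coalgebra.comul (R := k) b) ⊗ₜ[k] (Coalgebra.comul (R := k) c))))
  assoc_br : ∀ a b c d h : C,
    br k χ (br k χ a b c) d h = br k χ a b (br k χ c d h)
  left_cancel : ∀ c a : C,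
    χ ((TensorProduct.assoc k C C C) ((Coalgebra.comul (R := k) c) ⊗ₜ[k] a)) =
      Coalgebra.counit (R := k) c • a
  right_cancel : ∀ c a : C,
    χ (a ⊗ₜ[k] (Coalgebra.comul (R := k) c)) = Coalgebra.counit (R := k) c • a

/-- `B` is a Rota–Baxter operator on the Hopf heap `(C, Δ, χ)`:
`B [a,b,c] = [B a, B b, B c]` and
`B(a₁) ⊗ B(a₂) = [B(a)₁, B(B(a)₄), B(B(a)₂)] ⊗ B(a)₃`. -/
structure IsRBOp (χ : (C ⊗[k] (C ⊗[k] C)) →ₗ[k] C) (B : C →ₗ[k] C) : Prop where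
  map_br : ∀ a b c : C, B (br k χ a b c) = br k χ (B a) (B b) (B c)
  rb : ∀ a : C,
    TensorProduct.map B B (Coalgebra.comul (R := k) a) =
      TensorProduct.map (χ ∘ₗ TensorProduct.map LinearMap.id (TensorProduct.map B B))
        LinearMap.id (rbShuffle k C C C C (comul3 k (B a)))

/-- The multiplication `a ·ₓ b = [a, x, b]` of the Hopf algebra `H_x(C)`, as a linear map. -/
def heapMul (χ : (C ⊗[k] (C ⊗[k] C)) →ₗ[k] C) (x : C) : (C ⊗[k] C) →ₗ[k] C :=
  χ ∘ₗ TensorProduct.map LinearMap.id (TensorProduct.mk k C C x)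

/-- The antipode `S_x(a) = [x, a, x]` of the Hopf algebra `H_x(C)`, as a linear map. -/
def heapAntipode (χ : (C ⊗[k] (C ⊗[k] C)) →ₗ[k] C) (x : C) : C →ₗ[k] C :=
  χ ∘ₗ (TensorProduct.mk k C (C ⊗[k] C) x) ∘ₗ ((TensorProduct.mk k C C).flip x)

end Heap

section HeapHom

variable {C D : Type*} [AddCommGroup C] [Module k C] [Coalgebra k C]
  [AddCommGroup D] [Module k D] [Coalgebra k D]

/-- `f` is a homomorphism of Hopf heaps: a coalgebra map preserving the bracket. -/
def IsHeapHom (χC : (C ⊗[k] (C ⊗[k] C)) →ₗ[k] C) (χD : (D ⊗[k] (D ⊗[k] D)) →ₗ[k] D)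
    (f : C →ₗ[k] D) : Prop :=
  (∀ a : C, Coalgebra.comul (R := k) (f a) = TensorProduct.map f f (Coalgebra.comul (R := k) a)) ∧
  (∀ a : C, Coalgebra.counit (R := k) (f a) = Coalgebra.counit (R := k) a) ∧
  (∀ a b c : C, f (br k χC a b c) = br k χD (f a) (f b) (f c))

end HeapHom

section HopfAlg

variable (H : Type*) [Ring H] [HopfAlgebra k H]

/-- The Hopf-heap structure map `a ⊗ b ⊗ c ↦ a · S(b) · c` of a Hopf algebra. -/
def hopfHeapChi : (H ⊗[k] (H ⊗[k] H)) →ₗ[k] H :=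
  (LinearMap.mul' k H) ∘ₗ TensorProduct.map LinearMap.id
    ((LinearMap.mul' k H) ∘ₗ TensorProduct.map (HopfAlgebra.antipode (R := k)) LinearMap.id)

/-- The triple multiplication `a ⊗ (b ⊗ c) ↦ a·(b·c)`. -/
def mulTriple : (H ⊗[k] (H ⊗[k] H)) →ₗ[k] H :=
  (LinearMap.mul' k H) ∘ₗ TensorProduct.map LinearMap.id (LinearMap.mul' k H)

end HopfAlg

end
section Stmt18

variable {k : Type*} [Field k] {H : Type*} [AddCommGroup H] [Module k H] [Coalgebra k H]
  {M : Type*} [AddCommGroup M] [Module k M]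

/-- The coinvariants `M^{coH}_x = {m | ρ(m) = x ⊗ m}` of a left coaction. -/
noncomputable def lcoinv (x : H) (ρ : M →ₗ[k] (H ⊗[k] M)) : Submodule k M :=
  LinearMap.ker (ρ - TensorProduct.mk k H M x)

/-- The projection `P(m) = (x ⊗ m₍₋₁₎) ▷ m₍₀₎`. -/
noncomputable def lP (x : H) (ρ : M →ₗ[k] (H ⊗[k] M))
    (ψ : (H ⊗[k] (H ⊗[k] M)) →ₗ[k] M) : M →ₗ[k] M :=
  ψ ∘ₗ (TensorProduct.mk k H (H ⊗[k] M) x) ∘ₗ ρ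

/-- `h ⊗ m ↦ (h ⊗ x) ▷ m` on `H ⊗ M`. -/
noncomputable def lalphaT (x : H) (ψ : (H ⊗[k] (H ⊗[k] M)) →ₗ[k] M) :
    (H ⊗[k] M) →ₗ[k] M :=
  ψ ∘ₗ TensorProduct.map LinearMap.id (TensorProduct.mk k H M x)

/-- The structure map `α : H ⊗ M^{coH}_x → M`, `a ⊗ m ↦ (a ⊗ x) ▷ m`. -/
noncomputable def lalpha (x : H) (ρ : M →ₗ[k] (H ⊗[k] M))
    (ψ : (H ⊗[k] (H ⊗[k] M)) →ₗ[k] M) : (H ⊗[k] ↥(lcoinv x ρ)) →ₗ[k] M :=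
  (lalphaT x ψ) ∘ₗ TensorProduct.map LinearMap.id (lcoinv x ρ).subtype

/-- The map `β₀ : M → H ⊗ M`, `m ↦ m₍₋₁₎ ⊗ P(m₍₀₎)`. -/
noncomputable def lbeta (x : H) (ρ : M →ₗ[k] (H ⊗[k] M))
    (ψ : (H ⊗[k] (H ⊗[k] M)) →ₗ[k] M) : M →ₗ[k] (H ⊗[k] M) :=
  (TensorProduct.map LinearMap.id (lP x ρ ψ)) ∘ₗ ρ

/-- The coaction `h ⊗ m ↦ h₁ ⊗ (h₂ ⊗ m)` on `H ⊗ M^{coH}_x`. -/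
noncomputable def lrhoN (x : H) (ρ : M →ₗ[k] (H ⊗[k] M)) :
    (H ⊗[k] ↥(lcoinv x ρ)) →ₗ[k] (H ⊗[k] (H ⊗[k] ↥(lcoinv x ρ))) :=
  (TensorProduct.assoc k H H ↥(lcoinv x ρ)).toLinearMap ∘ₗ
    TensorProduct.map Coalgebra.comul LinearMap.id

/-- The action `(a ⊗ b) ▷ (g ⊗ m) = [a,b,g] ⊗ m` on `H ⊗ M^{coH}_x`. -/
noncomputable def lpsiN (χ : (H ⊗[k] (H ⊗[k] H)) →ₗ[k] H) (x : H)
    (ρ : M →ₗ[k] (H ⊗[k] M)) :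
    (H ⊗[k] (H ⊗[k] (H ⊗[k] ↥(lcoinv x ρ)))) →ₗ[k] (H ⊗[k] ↥(lcoinv x ρ)) :=
  (TensorProduct.map χ LinearMap.id) ∘ₗ
    (TensorProduct.assoc k H (H ⊗[k] H) ↥(lcoinv x ρ)).symm.toLinearMap ∘ₗ
    (TensorProduct.map LinearMap.id
      (TensorProduct.assoc k H H ↥(lcoinv x ρ)).symm.toLinearMap)

end Stmt18

set_option maxHeartbeats 1600000 in
/-- structure theorem for Hopf heap modules: for a left `H`-Hopf heap module
`(M, ▷, ρ)` and a group-like `x ∈ H`, the map `α : H ⊗ M^{coH}_x → M`,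
`a ⊗ m ↦ (a ⊗ x) ▷ m`, is an isomorphism of left `H`-Hopf heap modules, with inverse
`β(m) = m₍₋₁₎ ⊗ P(m₍₀₎)` where `P(m) = (x ⊗ m₍₋₁₎) ▷ m₍₀₎`. -/
theorem hopfHeapModule_structure_theorem {k : Type*} [Field k] {H : Type*} [AddCommGroup H]
    [Module k H] [Coalgebra k H] {M : Type*} [AddCommGroup M] [Module k M]
    (χ : (H ⊗[k] (H ⊗[k] H)) →ₗ[k] H) (hχ : IsHopfHeap k χ)
    (x : H) (hx : IsGrouplike k x)
    (ρ : M →ₗ[k] (H ⊗[k] M)) (ψ : (H ⊗[k] (H ⊗[k] M)) →ₗ[k] M)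
    -- `(M, ρ)` is a coassociative counital left comodule
    (hcoassoc : ∀ m : M, (TensorProduct.assoc k H H M)
        ((TensorProduct.map (Coalgebra.comul (R := k)) LinearMap.id) (ρ m)) =
      (TensorProduct.map LinearMap.id ρ) (ρ m))
    (hcounit : ∀ m : M, (TensorProduct.lid k M)
        ((TensorProduct.map (Coalgebra.counit (R := k)) LinearMap.id) (ρ m)) = m)
    -- `([a,b,c] ⊗ d) ▷ m = (a ⊗ b) ▷ ((c ⊗ d) ▷ m)`
    (hact1 : ∀ (a b c d : H) (m : M),
      ψ (br k χ a b c ⊗ₜ[k] (d ⊗ₜ[k] m)) = ψ (a ⊗ₜ[k] (b ⊗ₜ[k] ψ (c ⊗ₜ[k] (d ⊗ₜ[k] m)))))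
    -- `(c₁ ⊗ c₂) ▷ m = ε(c) m`
    (hact2 : ∀ (c : H) (m : M),
      ψ ((TensorProduct.assoc k H H M) ((Coalgebra.comul (R := k) c) ⊗ₜ[k] m)) =
        Coalgebra.counit (R := k) c • m)
    -- `ρ((c ⊗ d) ▷ m) = [c₁, d₂, m₍₋₁₎] ⊗ ((c₂ ⊗ d₁) ▷ m₍₀₎)`
    (hact3 : ∀ (c d : H) (m : M),
      ρ (ψ (c ⊗ₜ[k] (d ⊗ₜ[k] m))) =
        (TensorProduct.map χ ψ) (sweedlerShuffle k H H H H H M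
          ((Coalgebra.comul (R := k) c) ⊗ₜ[k]
            ((Coalgebra.comul (R := k) d) ⊗ₜ[k] (ρ m))))) :
    -- `P` takes values in `M^{coH}_x`
    (∀ m : M, lP x ρ ψ m ∈ lcoinv x ρ) ∧
    -- `α` is bijective
    Function.Bijective ⇑(lalpha x ρ ψ) ∧
    -- `α` is a comodule map
    (∀ z : H ⊗[k] ↥(lcoinv x ρ), ρ (lalpha x ρ ψ z) =
      (TensorProduct.map LinearMap.id (lalpha x ρ ψ)) (lrhoN x ρ z)) ∧
    -- `α` commutes with the actions
    (∀ (a b : H) (z : H ⊗[k] ↥(lcoinv x ρ)),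
      lalpha x ρ ψ (lpsiN χ x ρ (a ⊗ₜ[k] (b ⊗ₜ[k] z))) =
        ψ (a ⊗ₜ[k] (b ⊗ₜ[k] lalpha x ρ ψ z))) ∧
    -- `β` is a two-sided inverse of `α`
    (∀ m : M, lalphaT x ψ (lbeta x ρ ψ m) = m) ∧
    (∀ z : H ⊗[k] ↥(lcoinv x ρ), lbeta x ρ ψ (lalpha x ρ ψ z) =
      (TensorProduct.map LinearMap.id (lcoinv x ρ).subtype) z) := by
  
  obtain ⟨hx1, hx2⟩ := hx
  have hbr_xx : ∀ a : H, χ (a ⊗ₜ[k] (x ⊗ₜ[k] x)) = a := by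
    intro a
    have h := hχ.right_cancel x a
    rw [hx1, hx2, one_smul] at h
    exact h
  have hψxx : ∀ m : M, ψ (x ⊗ₜ[k] (x ⊗ₜ[k] m)) = m := by
    intro m
    have h := hact2 x m
    rw [hx1, hx2, one_smul, TensorProduct.assoc_tmul] at h
    exact h
  -- membership criterion for `lcoinv`
  have hmem : ∀ m : M, m ∈ lcoinv x ρ ↔ ρ m = x ⊗ₜ[k] m := by
    intro m
    rw [lcoinv, LinearMap.mem_ker, LinearMap.sub_apply, sub_eq_zero]
    rfl
  -- KEY LEMMA L1
  have L1 : ∀ (a : H) (n : M), ρ n = x ⊗ₜ[k] n →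
      ρ (ψ (a ⊗ₜ[k] (x ⊗ₜ[k] n))) =
        TensorProduct.map LinearMap.id
          (ψ ∘ₗ (TensorProduct.mk k H (H ⊗[k] M)).flip (x ⊗ₜ[k] n))
          (Coalgebra.comul (R := k) a) := by
    intro a n hn
    rw [hact3 a x n, hx1, hn]
    generalize Coalgebra.comul (R := k) a = u
    induction u using TensorProduct.induction_on with
    | zero => simp
    | add u v hu hv => simp only [map_add, add_tmul, tmul_add, hu, hv]
    | tmul p q =>
      simp only [sweedlerShuffle, LinearMap.coe_comp, Function.comp_apply,
        LinearEquiv.coe_coe, TensorProduct.map_tmul, TensorProduct.comm_tmul,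
        TensorProduct.tensorTensorTensorComm_tmul, LinearMap.id_coe, id_eq,
        TensorProduct.mk_apply, LinearMap.flip_apply, TensorProduct.assoc_tmul]
      rw [hbr_xx]
  -- claim 1 : `P` lands in the coinvariants
  have step1 : ∀ t : H ⊗[k] M, ρ (ψ (x ⊗ₜ[k] t)) =
      TensorProduct.map χ ψ (sweedlerShuffle k H H H H H M
        ((x ⊗ₜ[k] x) ⊗ₜ[k]
          (TensorProduct.map (Coalgebra.comul (R := k)) ρ t))) := by
    intro t
    induction t using TensorProduct.induction_on with
    | zero => simp
    | add u v hu hv => simp only [map_add, add_tmul, tmul_add, hu, hv]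
    | tmul c n => rw [hact3 x c n, hx1]; simp
  have step2 : ∀ t : H ⊗[k] M,
      TensorProduct.map χ ψ (sweedlerShuffle k H H H H H M
        ((x ⊗ₜ[k] x) ⊗ₜ[k]
          (TensorProduct.map (Coalgebra.comul (R := k)) LinearMap.id
            ((TensorProduct.assoc k H H M)
              (TensorProduct.map (Coalgebra.comul (R := k)) LinearMap.id t))))) =
      x ⊗ₜ[k] ψ (x ⊗ₜ[k] t) := by
    intro t
    induction t using TensorProduct.induction_on with
    | zero => simp
    | add u v hu hv => simp only [map_add, add_tmul, tmul_add, hu, hv]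
    | tmul c s =>
      have sub1 : ∀ u : H ⊗[k] H,
          TensorProduct.map χ ψ (sweedlerShuffle k H H H H H M
            ((x ⊗ₜ[k] x) ⊗ₜ[k]
              (TensorProduct.map (Coalgebra.comul (R := k)) LinearMap.id
                ((TensorProduct.assoc k H H M) (u ⊗ₜ[k] s))))) =
          (TensorProduct.map
              (χ ∘ₗ TensorProduct.mk k H (H ⊗[k] H) x)
              (ψ ∘ₗ (TensorProduct.mk k H (H ⊗[k] M) x) ∘ₗ
                (TensorProduct.mk k H M).flip s) ∘ₗ
            (TensorProduct.comm k H (H ⊗[k] H)).toLinearMap)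
            ((TensorProduct.assoc k H H H)
              (LinearMap.rTensor H (Coalgebra.comul (R := k)) u)) := by
        intro u
        induction u using TensorProduct.induction_on with
        | zero => simp
        | add u v hu hv => simp only [map_add, add_tmul, tmul_add, hu, hv]
        | tmul a b =>
          simp only [TensorProduct.assoc_tmul, LinearMap.rTensor_tmul,
            TensorProduct.map_tmul, LinearMap.id_coe, id_eq]
          generalize Coalgebra.comul (R := k) a = v
          induction v using TensorProduct.induction_on with
          | zero => simp
          | add v w hv hw => simp only [map_add, add_tmul, tmul_add, hv, hw]
          | tmul p q =>
            simp only [sweedlerShuffle, LinearMap.coe_comp, Function.comp_apply,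
            LinearEquiv.coe_coe, TensorProduct.map_tmul, TensorProduct.comm_tmul,
            TensorProduct.tensorTensorTensorComm_tmul, LinearMap.id_coe, id_eq,
            TensorProduct.mk_apply, LinearMap.flip_apply, TensorProduct.assoc_tmul]
      rw [show TensorProduct.map (Coalgebra.comul (R := k)) LinearMap.id (c ⊗ₜ[k] s) =
            (Coalgebra.comul (R := k) c) ⊗ₜ[k] s by simp,
          sub1 (Coalgebra.comul (R := k) c), Coalgebra.coassoc_apply]
      have sub2 : ∀ w : H ⊗[k] H,
          (TensorProduct.map
              (χ ∘ₗ TensorProduct.mk k H (H ⊗[k] H) x)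
              (ψ ∘ₗ (TensorProduct.mk k H (H ⊗[k] M) x) ∘ₗ
                (TensorProduct.mk k H M).flip s) ∘ₗ
            (TensorProduct.comm k H (H ⊗[k] H)).toLinearMap)
            (LinearMap.lTensor H (Coalgebra.comul (R := k)) w) =
          x ⊗ₜ[k] ψ (x ⊗ₜ[k]
            (((TensorProduct.rid k H)
              (LinearMap.lTensor H (Coalgebra.counit (R := k)) w)) ⊗ₜ[k] s)) := by
        intro w
        induction w using TensorProduct.induction_on with
        | zero => simp
        | add u v hu hv => simp only [map_add, add_tmul, tmul_add, hu, hv]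
        | tmul a b =>
          rw [LinearMap.lTensor_tmul, LinearMap.lTensor_tmul, TensorProduct.rid_tmul]
          simp only [LinearMap.comp_apply, LinearEquiv.coe_coe, TensorProduct.comm_tmul,
            TensorProduct.map_tmul, TensorProduct.mk_apply, LinearMap.flip_apply]
          rw [hχ.right_cancel b x]
          simp [smul_tmul, tmul_smul]
      rw [sub2, Coalgebra.lTensor_counit_comul, TensorProduct.rid_tmul, one_smul]
  have hP : ∀ m : M, ρ (lP x ρ ψ m) = x ⊗ₜ[k] lP x ρ ψ m := by
    intro m
    have h1 : lP x ρ ψ m = ψ (x ⊗ₜ[k] ρ m) := rfl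
    rw [h1, step1 (ρ m)]
    have h2 : TensorProduct.map (Coalgebra.comul (R := k)) ρ (ρ m) =
        TensorProduct.map (Coalgebra.comul (R := k)) LinearMap.id
          ((TensorProduct.assoc k H H M)
            (TensorProduct.map (Coalgebra.comul (R := k)) LinearMap.id (ρ m))) := by
      rw [hcoassoc m]
      have hcomp : TensorProduct.map (Coalgebra.comul (R := k)) LinearMap.id ∘ₗ
          TensorProduct.map (LinearMap.id (R := k) (M := H)) ρ =
          TensorProduct.map (Coalgebra.comul (R := k)) ρ := by
        rw [← TensorProduct.map_comp]
        simp
      rw [← hcomp, LinearMap.comp_apply]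
    rw [h2, step2 (ρ m)]
  have claim1 : ∀ m : M, lP x ρ ψ m ∈ lcoinv x ρ := fun m => (hmem _).2 (hP m)
  -- claim 5 : `α ∘ β = id`
  have claim5 : ∀ m : M, lalphaT x ψ (lbeta x ρ ψ m) = m := by
    intro m
    have h1 : lbeta x ρ ψ m = TensorProduct.map LinearMap.id (lP x ρ ψ) (ρ m) := rfl
    have c5a : ∀ t : H ⊗[k] M,
        lalphaT x ψ (TensorProduct.map LinearMap.id (lP x ρ ψ) t) =
          ψ (TensorProduct.map LinearMap.id ρ t) := by
      intro t
      induction t using TensorProduct.induction_on with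
      | zero => simp
      | add u v hu hv => simp only [map_add, add_tmul, tmul_add, hu, hv]
      | tmul h n =>
        have h2 : lalphaT x ψ (TensorProduct.map LinearMap.id (lP x ρ ψ) (h ⊗ₜ[k] n)) =
            ψ (h ⊗ₜ[k] (x ⊗ₜ[k] ψ (x ⊗ₜ[k] ρ n))) := rfl
        rw [h2]
        have h3 : TensorProduct.map LinearMap.id ρ (h ⊗ₜ[k] n) = h ⊗ₜ[k] ρ n := by simp
        rw [h3]
        generalize ρ n = u
        induction u using TensorProduct.induction_on with
        | zero => simp
        | add u v hu hv => simp only [map_add, add_tmul, tmul_add, hu, hv]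
        | tmul c d =>
          rw [← hact1 h x x c d]
          have : br k χ h x x = h := hbr_xx h
          rw [this]
    rw [h1, c5a, ← hcoassoc m]
    have c5b : ∀ t : H ⊗[k] M,
        ψ ((TensorProduct.assoc k H H M)
          (TensorProduct.map (Coalgebra.comul (R := k)) LinearMap.id t)) =
        (TensorProduct.lid k M)
          (TensorProduct.map (Coalgebra.counit (R := k)) LinearMap.id t) := by
      intro t
      induction t using TensorProduct.induction_on with
      | zero => simp
      | add u v hu hv => simp only [map_add, add_tmul, tmul_add, hu, hv]
      | tmul c n =>
        have h4 : TensorProduct.map (Coalgebra.comul (R := k)) LinearMap.id (c ⊗ₜ[k] n) =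
            (Coalgebra.comul (R := k) c) ⊗ₜ[k] n := by simp
        rw [h4, hact2 c n]
        simp
    rw [c5b, hcounit m]
  -- claim 6 : `β ∘ α` is the inclusion
  have claim6 : ∀ z : H ⊗[k] ↥(lcoinv x ρ), lbeta x ρ ψ (lalpha x ρ ψ z) =
      (TensorProduct.map LinearMap.id (lcoinv x ρ).subtype) z := by
    intro z
    induction z using TensorProduct.induction_on with
    | zero => simp
    | add u v hu hv => simp only [map_add, add_tmul, tmul_add, hu, hv]
    | tmul a m' =>
      obtain ⟨n, hn'⟩ : ∃ n : M, (m' : M) = n := ⟨m', rfl⟩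
      have hn : ρ n = x ⊗ₜ[k] n := (hmem n).1 (hn' ▸ m'.2)
      have h1 : lalpha x ρ ψ (a ⊗ₜ[k] m') = ψ (a ⊗ₜ[k] (x ⊗ₜ[k] n)) := by
        simp [lalpha, lalphaT, hn']
      rw [h1]
      have h2 : lbeta x ρ ψ (ψ (a ⊗ₜ[k] (x ⊗ₜ[k] n))) =
          TensorProduct.map LinearMap.id (lP x ρ ψ) (ρ (ψ (a ⊗ₜ[k] (x ⊗ₜ[k] n)))) := rfl
      rw [h2, L1 a n hn]
      have hPLn : ∀ q : H, lP x ρ ψ (ψ (q ⊗ₜ[k] (x ⊗ₜ[k] n))) =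
          Coalgebra.counit (R := k) q • n := by
        intro q
        have h3 : lP x ρ ψ (ψ (q ⊗ₜ[k] (x ⊗ₜ[k] n))) =
            ψ (x ⊗ₜ[k] ρ (ψ (q ⊗ₜ[k] (x ⊗ₜ[k] n)))) := rfl
        rw [h3, L1 q n hn]
        have sub : ∀ u : H ⊗[k] H,
            ψ (x ⊗ₜ[k] (TensorProduct.map LinearMap.id
              (ψ ∘ₗ (TensorProduct.mk k H (H ⊗[k] M)).flip (x ⊗ₜ[k] n)) u)) =
            ψ (χ (x ⊗ₜ[k] u) ⊗ₜ[k] (x ⊗ₜ[k] n)) := by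
          intro u
          induction u using TensorProduct.induction_on with
          | zero => simp
          | add u v hu hv => simp only [map_add, add_tmul, tmul_add, hu, hv]
          | tmul p q' =>
            have h5 : TensorProduct.map LinearMap.id
                (ψ ∘ₗ (TensorProduct.mk k H (H ⊗[k] M)).flip (x ⊗ₜ[k] n)) (p ⊗ₜ[k] q') =
                p ⊗ₜ[k] ψ (q' ⊗ₜ[k] (x ⊗ₜ[k] n)) := rfl
            rw [h5, ← hact1 x p q' x n]
            rfl
        rw [sub, hχ.right_cancel q x]
        rw [← smul_tmul', map_smul, hψxx]
      have sub2 : ∀ w : H ⊗[k] H,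
          TensorProduct.map LinearMap.id (lP x ρ ψ)
            (TensorProduct.map LinearMap.id
              (ψ ∘ₗ (TensorProduct.mk k H (H ⊗[k] M)).flip (x ⊗ₜ[k] n)) w) =
          ((TensorProduct.rid k H)
            (LinearMap.lTensor H (Coalgebra.counit (R := k)) w)) ⊗ₜ[k] n := by
        intro w
        induction w using TensorProduct.induction_on with
        | zero => simp
        | add u v hu hv => simp only [map_add, add_tmul, tmul_add, hu, hv]
        | tmul p q =>
          have h6 : TensorProduct.map LinearMap.id
              (ψ ∘ₗ (TensorProduct.mk k H (H ⊗[k] M)).flip (x ⊗ₜ[k] n)) (p ⊗ₜ[k] q) =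
              p ⊗ₜ[k] ψ (q ⊗ₜ[k] (x ⊗ₜ[k] n)) := rfl
          rw [h6]
          have h7 : TensorProduct.map LinearMap.id (lP x ρ ψ)
              (p ⊗ₜ[k] ψ (q ⊗ₜ[k] (x ⊗ₜ[k] n))) =
              p ⊗ₜ[k] lP x ρ ψ (ψ (q ⊗ₜ[k] (x ⊗ₜ[k] n))) := by simp
          rw [h7, hPLn q, LinearMap.lTensor_tmul, TensorProduct.rid_tmul]
          rw [tmul_smul, smul_tmul']
      rw [sub2, Coalgebra.lTensor_counit_comul, TensorProduct.rid_tmul, one_smul]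
      simp [hn']
  -- claim 3 : `α` is a comodule map
  have claim3 : ∀ z : H ⊗[k] ↥(lcoinv x ρ), ρ (lalpha x ρ ψ z) =
      (TensorProduct.map LinearMap.id (lalpha x ρ ψ)) (lrhoN x ρ z) := by
    intro z
    induction z using TensorProduct.induction_on with
    | zero => simp
    | add u v hu hv => simp only [map_add, add_tmul, tmul_add, hu, hv]
    | tmul a m' =>
      obtain ⟨n, hn'⟩ : ∃ n : M, (m' : M) = n := ⟨m', rfl⟩
      have hn : ρ n = x ⊗ₜ[k] n := (hmem n).1 (hn' ▸ m'.2)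
      have h1 : lalpha x ρ ψ (a ⊗ₜ[k] m') = ψ (a ⊗ₜ[k] (x ⊗ₜ[k] n)) := by
        simp [lalpha, lalphaT, hn']
      rw [h1, L1 a n hn]
      have h2 : lrhoN x ρ (a ⊗ₜ[k] m') =
          (TensorProduct.assoc k H H ↥(lcoinv x ρ))
            ((Coalgebra.comul (R := k) a) ⊗ₜ[k] m') := by
        simp [lrhoN]
      rw [h2]
      generalize Coalgebra.comul (R := k) a = u
      induction u using TensorProduct.induction_on with
      | zero => simp
      | add u v hu hv => simp only [map_add, add_tmul, tmul_add, hu, hv]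
      | tmul p q =>
        rw [TensorProduct.assoc_tmul]
        simp [lalpha, lalphaT, hn']
  -- claim 4 : `α` commutes with the actions
  have claim4 : ∀ (a b : H) (z : H ⊗[k] ↥(lcoinv x ρ)),
      lalpha x ρ ψ (lpsiN χ x ρ (a ⊗ₜ[k] (b ⊗ₜ[k] z))) =
        ψ (a ⊗ₜ[k] (b ⊗ₜ[k] lalpha x ρ ψ z)) := by
    intro a b z
    induction z using TensorProduct.induction_on with
    | zero => simp
    | add u v hu hv => simp only [map_add, add_tmul, tmul_add, hu, hv]
    | tmul g m' =>
      have h1 : lpsiN χ x ρ (a ⊗ₜ[k] (b ⊗ₜ[k] (g ⊗ₜ[k] m'))) =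
          χ (a ⊗ₜ[k] (b ⊗ₜ[k] g)) ⊗ₜ[k] m' := by
        simp [lpsiN]
      rw [h1]
      have h2 : lalpha x ρ ψ (χ (a ⊗ₜ[k] (b ⊗ₜ[k] g)) ⊗ₜ[k] m') =
          ψ (χ (a ⊗ₜ[k] (b ⊗ₜ[k] g)) ⊗ₜ[k] (x ⊗ₜ[k] (m' : M))) := by
        simp [lalpha, lalphaT]
      have h3 : lalpha x ρ ψ (g ⊗ₜ[k] m') = ψ (g ⊗ₜ[k] (x ⊗ₜ[k] (m' : M))) := by
        simp [lalpha, lalphaT]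
      rw [h2, h3]
      exact hact1 a b g x (m' : M)
  -- bijectivity
  have hβhat : ∀ m : M, lalpha x ρ ψ
      (TensorProduct.map LinearMap.id
        (LinearMap.codRestrict (lcoinv x ρ) (lP x ρ ψ) claim1) (ρ m)) = m := by
    intro m
    have h1 : lalpha x ρ ψ = (lalphaT x ψ) ∘ₗ
        TensorProduct.map LinearMap.id (lcoinv x ρ).subtype := rfl
    rw [h1]
    rw [LinearMap.comp_apply, ← LinearMap.comp_apply
      (TensorProduct.map LinearMap.id (lcoinv x ρ).subtype), ← TensorProduct.map_comp]
    rw [LinearMap.subtype_comp_codRestrict, LinearMap.id_comp]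
    exact claim5 m
  have hinj : Function.Injective ⇑(lalpha x ρ ψ) := by
    have hsub : Function.Injective ⇑((lcoinv x ρ).subtype) := Subtype.coe_injective
    have hmapinj : Function.Injective
        ⇑(TensorProduct.map (LinearMap.id (R := k) (M := H)) (lcoinv x ρ).subtype) := by
      have h := Module.Flat.lTensor_preserves_injective_linearMap
        (M := H) ((lcoinv x ρ).subtype) hsub
      exact h
    intro z z' hzz
    apply hmapinj
    rw [← claim6 z, ← claim6 z', hzz]
  have hsurj : Function.Surjective ⇑(lalpha x ρ ψ) := fun m =>
    ⟨TensorProduct.map LinearMap.id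
      (LinearMap.codRestrict (lcoinv x ρ) (lP x ρ ψ) claim1) (ρ m), hβhat m⟩
  exact ⟨claim1, ⟨hinj, hsurj⟩, claim3, claim4, claim5, claim6⟩
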